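/- Let A be an abelian group that is 2-divisible (for every a ∈ A there exists b ∈ A with 2b = a), let n ≥ 1, and let Λ ⊆ ℤⁿ be the sublattice {v ∈ ℤⁿ : v₁ + ⋯ + vₙ is even}. Let e₁, …, eₙ be the standard basis of ℤⁿ (so 2eᵢ ∈ Λ). Then the group homomorphism φ : Aⁿ → A ⊗_ℤ Λ defined by φ(a₁,…,aₙ) = Σᵢ aᵢ ⊗ (2eᵢ) is surjective, and its kernel is exactly the subgroup {(τ₁,…,τₙ) ∈ Aⁿ : 2τᵢ = 0 for all i, and τ₁ + ⋯ + τₙ = 0}. -/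

import Mathlib

open scoped TensorProduct

/-- The sublattice `Λ = {v ∈ ℤⁿ : v₁ + ⋯ + vₙ is even}` of `ℤⁿ`. -/
def sumEvenLattice (n : ℕ) : Submodule ℤ (Fin n → ℤ) where
  carrier := {v | Even (∑ i, v i)}
  add_mem' := by
    intro a b ha hb
    simpa [Finset.sum_add_distrib] using ha.add hb
  zero_mem' := by simp
  smul_mem' := by
    intro c v hv
    simpa [smul_eq_mul, ← Finset.mul_sum] using hv.mul_left c

/-- The element `2eᵢ` of the sum-even lattice, where `eᵢ` is the `i`-th standard basis
vector of `ℤⁿ`. -/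
def twoStdBasis (n : ℕ) (i : Fin n) : sumEvenLattice n :=
  ⟨fun j => if j = i then 2 else 0, by
    simp only [sumEvenLattice, Submodule.mem_mk, AddSubmonoid.mem_mk,
      AddSubsemigroup.mem_mk, Set.mem_setOf_eq, Finset.sum_ite_eq',
      Finset.mem_univ, if_true]
    exact ⟨1, by ring⟩⟩

/- ### Auxiliary material -/

lemma mem_sumEvenLattice_iff {n : ℕ} (v : Fin n → ℤ) :
    v ∈ sumEvenLattice n ↔ Even (∑ i, v i) := Iff.rfl

/-- The `j`-th coordinate map `Λ → ℤ`. -/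
def coordMap (n : ℕ) (j : Fin n) : sumEvenLattice n →ₗ[ℤ] ℤ :=
  (LinearMap.proj j).comp (sumEvenLattice n).subtype

@[simp] lemma coordMap_apply {n : ℕ} (j : Fin n) (v : sumEvenLattice n) :
    coordMap n j v = v.1 j := rfl

lemma tmul_two_smul {A : Type*} [AddCommGroup A] {n : ℕ} (a : A) (v : sumEvenLattice n) :
    a ⊗ₜ[ℤ] ((2 : ℤ) • v) = (a + a) ⊗ₜ[ℤ] v := by
  rw [two_smul, TensorProduct.tmul_add, ← TensorProduct.add_tmul]

/-- Half of the coordinate sum, as a linear map `Λ → ℤ`. -/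
def halfSum (n : ℕ) : sumEvenLattice n →ₗ[ℤ] ℤ where
  toFun v := (∑ i, v.1 i) / 2
  map_add' := by
    rintro ⟨a, ha⟩ ⟨b, hb⟩
    rw [mem_sumEvenLattice_iff, Int.even_iff] at ha hb
    simp only [Submodule.coe_add, Pi.add_apply, Finset.sum_add_distrib]
    omega
  map_smul' := by
    rintro c ⟨a, ha⟩
    rw [mem_sumEvenLattice_iff] at ha
    obtain ⟨k, hk⟩ := ha
    simp only [SetLike.mk_smul_mk, Pi.smul_apply, smul_eq_mul,
      ← Finset.mul_sum, hk, RingHom.id_apply]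
    rw [show c * (k + k) = 2 * (c * k) by ring, show k + k = 2 * k by ring,
      Int.mul_ediv_cancel_left _ two_ne_zero, Int.mul_ediv_cancel_left _ two_ne_zero]

lemma halfSum_apply {n : ℕ} (v : sumEvenLattice n) :
    halfSum n v = (∑ i, v.1 i) / 2 := rfl

/-- Detection map `A ⊗ Λ → A` associated to a linear functional `f : Λ → ℤ`. -/
noncomputable def detect {A : Type*} [AddCommGroup A] {n : ℕ}
    (f : sumEvenLattice n →ₗ[ℤ] ℤ) : A ⊗[ℤ] sumEvenLattice n →ₗ[ℤ] A :=
  TensorProduct.lift (((LinearMap.lsmul ℤ A).comp f).flip)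

@[simp] lemma detect_tmul {A : Type*} [AddCommGroup A] {n : ℕ}
    (f : sumEvenLattice n →ₗ[ℤ] ℤ) (a : A) (v : sumEvenLattice n) :
    detect f (a ⊗ₜ[ℤ] v) = f v • a := by
  exact TensorProduct.lift.tmul (f' := ((LinearMap.lsmul ℤ A).comp f).flip) a v

@[simp] lemma coordMap_twoStdBasis {n : ℕ} (j i : Fin n) :
    coordMap n j (twoStdBasis n i) = if j = i then 2 else 0 := rfl

@[simp] lemma halfSum_twoStdBasis {n : ℕ} (i : Fin n) :
    halfSum n (twoStdBasis n i) = 1 := by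
  simp [halfSum_apply, twoStdBasis, Finset.sum_ite_eq']

/-- The element `eᵢ + e_{j₀}` of the sum-even lattice. -/
def gLat (n : ℕ) (i j0 : Fin n) : sumEvenLattice n :=
  ⟨fun j => (if j = i then 1 else 0) + (if j = j0 then 1 else 0), by
    rw [mem_sumEvenLattice_iff]
    simp [Finset.sum_add_distrib, Finset.sum_ite_eq']⟩

lemma twoStdBasis_eq_gLat {n : ℕ} (i j0 : Fin n) :
    twoStdBasis n i = (2 : ℤ) • gLat n i j0 - gLat n j0 j0 := by
  ext j
  simp only [twoStdBasis, gLat, AddSubgroupClass.coe_sub, SetLike.mk_smul_mk,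
    Pi.sub_apply, Pi.smul_apply, smul_eq_mul]
  split_ifs <;> ring

lemma sum_smul_twoStdBasis {n : ℕ} (v : sumEvenLattice n) :
    (∑ i, v.1 i • twoStdBasis n i) = (2 : ℤ) • v := by
  ext j
  rw [AddSubmonoidClass.coe_finset_sum]
  simp only [twoStdBasis, SetLike.val_smul, Pi.smul_apply, smul_eq_mul,
    Finset.sum_apply, mul_ite, mul_zero]
  simp [Finset.sum_ite_eq', mul_comm]

/-- Let `A` be a 2-divisible abelian group, `n ≥ 1`, and
`Λ ⊆ ℤⁿ` the sum-even sublattice.  The homomorphism `φ : Aⁿ → A ⊗_ℤ Λ`,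
`φ(a₁,…,aₙ) = Σᵢ aᵢ ⊗ (2eᵢ)`, is surjective, and its kernel is exactly the
subgroup of tuples of 2-torsion elements summing to zero. -/
theorem surjective_and_kernel_of_tensor_sumEvenLattice
    (A : Type*) [AddCommGroup A] (hdiv : ∀ a : A, ∃ b : A, 2 • b = a)
    (n : ℕ) (hn : 1 ≤ n) :
    Function.Surjective
        (fun a : Fin n → A => ∑ i, a i ⊗ₜ[ℤ] (twoStdBasis n i)) ∧
      ∀ a : Fin n → A,
        (∑ i, a i ⊗ₜ[ℤ] (twoStdBasis n i)) = (0 : A ⊗[ℤ] (sumEvenLattice n)) ↔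
          ((∀ i, 2 • a i = 0) ∧ ∑ i, a i = 0) := by
  constructor
  · -- Surjectivity
    intro t
    induction t using TensorProduct.induction_on with
    | zero => exact ⟨0, by simp⟩
    | tmul a v =>
        obtain ⟨b, hb⟩ := hdiv a
        refine ⟨fun i => v.1 i • b, ?_⟩
        calc (∑ i, (v.1 i • b) ⊗ₜ[ℤ] twoStdBasis n i)
            = ∑ i, b ⊗ₜ[ℤ] (v.1 i • twoStdBasis n i) := by
              simp [TensorProduct.smul_tmul]
          _ = b ⊗ₜ[ℤ] (∑ i, v.1 i • twoStdBasis n i) := by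
              rw [TensorProduct.tmul_sum]
          _ = b ⊗ₜ[ℤ] ((2 : ℤ) • v) := by rw [sum_smul_twoStdBasis]
          _ = (b + b) ⊗ₜ[ℤ] v := tmul_two_smul b v
          _ = a ⊗ₜ[ℤ] v := by rw [← two_smul ℕ b, hb]
    | add x y hx hy =>
        obtain ⟨ax, hax⟩ := hx
        obtain ⟨ay, hay⟩ := hy
        exact ⟨ax + ay, by simp only [← hax, ← hay, ← Finset.sum_add_distrib,
          TensorProduct.add_tmul, Pi.add_apply]⟩
  · intro a
    constructor
    · intro h
      constructor
      · intro j
        have h1 := congrArg (detect (A := A) (coordMap n j)) h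
        simp only [map_sum, detect_tmul, coordMap_twoStdBasis, map_zero,
          ite_smul, zero_smul, Finset.sum_ite_eq, Finset.mem_univ, if_true] at h1
        rw [two_smul] at h1 ⊢
        exact h1
      · have h2 := congrArg (detect (A := A) (halfSum n)) h
        simp only [map_sum, detect_tmul, halfSum_twoStdBasis, one_smul,
          map_zero] at h2
        exact h2
    · rintro ⟨htor, hsum⟩
      set j0 : Fin n := ⟨0, hn⟩
      have h2 : ∀ i, a i + a i = 0 := by
        intro i
        have := htor i
        rwa [two_smul] at this
      have key : ∀ i, a i ⊗ₜ[ℤ] twoStdBasis n i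
          = - (a i ⊗ₜ[ℤ] gLat n j0 j0) := by
        intro i
        rw [twoStdBasis_eq_gLat i j0, TensorProduct.tmul_sub, tmul_two_smul,
          h2 i, TensorProduct.zero_tmul, zero_sub]
      calc (∑ i, a i ⊗ₜ[ℤ] twoStdBasis n i)
          = ∑ i, - (a i ⊗ₜ[ℤ] gLat n j0 j0) :=
            Finset.sum_congr rfl fun i _ => key i
        _ = - ((∑ i, a i) ⊗ₜ[ℤ] gLat n j0 j0) := by
            rw [TensorProduct.sum_tmul, Finset.sum_neg_distrib]
        _ = 0 := by rw [hsum, TensorProduct.zero_tmul, neg_zero]
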